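/- Let S > 0 and let (τ_i)_{i≥1} be independent identically distributed random variables, each exponentially distributed with rate 1. Let N = min{ i ≥ 1 : τ_i ≥ S } (which is almost surely finite) and ν = τ_1 + τ_2 + ⋯ + τ_N. Then E[ν] = e^{S}, and for every real t with t e^{S(1−t)} < 1 and t < 1, E[e^{t ν}] = 1/(1 − t e^{S(1−t)}). -/

import Mathlib

open Filter MeasureTheory ProbabilityTheory

section AuxRenewal

open Set
open scoped ENNReal Topology

private lemma aux_exp_Ioc {c : ℝ} (hc : c < 0) {S : ℝ} (hS : 0 ≤ S) :
    ∫ x in Set.Ioc 0 S, Real.exp (c * x) = (1 - Real.exp (c * S)) / (-c) := by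
  rw [← intervalIntegral.integral_of_le hS]
  have h : ∀ x ∈ Set.uIcc (0:ℝ) S, HasDerivAt (fun y => Real.exp (c * y) / c)
      (Real.exp (c * x)) x := by
    intro x _
    have h1 := (((hasDerivAt_id x).const_mul c).exp).div_const c
    rw [mul_one, mul_div_cancel_right₀ _ hc.ne] at h1
    exact h1
  rw [intervalIntegral.integral_eq_sub_of_hasDerivAt h
    ((Real.continuous_exp.comp (continuous_const.mul continuous_id)).intervalIntegrable _ _)]
  rw [mul_zero, Real.exp_zero]
  rw [div_neg, ← neg_div]
  ring_nf

private lemma aux_exp_Ioi_int {c : ℝ} (hc : c < 0) (S : ℝ) :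
    IntegrableOn (fun x => Real.exp (c * x)) (Set.Ioi S) := by
  simpa using exp_neg_integrableOn_Ioi S (by linarith : (0:ℝ) < -c)

private lemma aux_exp_tendsto {c : ℝ} (hc : c < 0) :
    Tendsto (fun x => Real.exp (c * x) / c) atTop (𝓝 0) := by
  have h1 : Tendsto (fun x : ℝ => c * x) atTop atBot := tendsto_id.const_mul_atTop_of_neg hc
  have h2 := (Real.tendsto_exp_atBot.comp h1).div_const c
  simpa using h2

private lemma aux_exp_Ioi {c : ℝ} (hc : c < 0) (S : ℝ) :
    ∫ x in Set.Ioi S, Real.exp (c * x) = Real.exp (c * S) / (-c) := by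
  have hderiv : ∀ x ∈ Set.Ici S, HasDerivAt (fun y => Real.exp (c * y) / c)
      (Real.exp (c * x)) x := by
    intro x _
    have h1 := (((hasDerivAt_id x).const_mul c).exp).div_const c
    rw [mul_one, mul_div_cancel_right₀ _ hc.ne] at h1
    exact h1
  rw [integral_Ioi_of_hasDerivAt_of_nonneg' hderiv
    (fun x _ => (Real.exp_pos _).le) (aux_exp_tendsto hc)]
  rw [zero_sub, div_neg, ← neg_div]

private lemma aux_xexp_deriv (x : ℝ) : HasDerivAt (fun y => -((y + 1) * Real.exp (-y)))
    (x * Real.exp (-x)) x := by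
  have h1 : HasDerivAt (fun y : ℝ => y + 1) 1 x := (hasDerivAt_id x).add_const 1
  have h2 : HasDerivAt (fun y : ℝ => Real.exp (-y)) (-Real.exp (-x)) x := by
    simpa using ((hasDerivAt_id x).neg).exp
  have h3 := (h1.mul h2).neg
  exact h3.congr_deriv (by ring)

private lemma aux_xexp_tendsto :
    Tendsto (fun x : ℝ => -((x + 1) * Real.exp (-x))) atTop (𝓝 0) := by
  have h := ((Real.tendsto_pow_mul_exp_neg_atTop_nhds_zero 1).add
    Real.tendsto_exp_neg_atTop_nhds_zero).neg
  have he : (fun x : ℝ => -((x + 1) * Real.exp (-x)))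
      = fun x => -(x ^ 1 * Real.exp (-x) + Real.exp (-x)) := by
    funext x; ring
  rw [he]
  simpa using h

private lemma aux_xexp_int : IntegrableOn (fun x : ℝ => x * Real.exp (-x)) (Set.Ioi (0:ℝ)) :=
  integrableOn_Ioi_deriv_of_nonneg' (fun x _ => aux_xexp_deriv x)
    (fun x hx => mul_nonneg (le_of_lt hx) (Real.exp_pos _).le) aux_xexp_tendsto

private lemma aux_xexp : ∫ x in Set.Ioi (0:ℝ), x * Real.exp (-x) = 1 := by
  rw [integral_Ioi_of_hasDerivAt_of_nonneg' (fun x _ => aux_xexp_deriv x)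
    (fun x hx => mul_nonneg (le_of_lt hx) (Real.exp_pos _).le) aux_xexp_tendsto]
  simp

variable {Ω : Type*} [MeasurableSpace Ω] {μ : Measure Ω}

private lemma aux_lintegral_prod [IsProbabilityMeasure μ]
    {τ : ℕ → Ω → ℝ} (hmeas : ∀ i, Measurable (τ i))
    (hindep : iIndepFun τ μ)
    (F : ℕ → ℝ → ℝ≥0∞) (hF : ∀ i, Measurable (F i)) (s : Finset ℕ) :
    ∫⁻ ω, ∏ i ∈ s, F i (τ i ω) ∂μ = ∏ i ∈ s, ∫⁻ ω, F i (τ i ω) ∂μ := by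
  classical
  induction s using Finset.induction_on with
  | empty => simp
  | @insert a s ha ih =>
    have hg : iIndepFun (fun i => (F i) ∘ (τ i)) μ :=
      hindep.comp _ hF
    have hmg : ∀ i, Measurable ((F i) ∘ (τ i)) := fun i => (hF i).comp (hmeas i)
    have hind : IndepFun ((F a) ∘ (τ a)) (∏ j ∈ s, (F j) ∘ (τ j)) μ :=
      (hg.indepFun_finsetProd_of_notMem hmg ha).symm
    have hmp : Measurable (∏ j ∈ s, (F j) ∘ (τ j)) := by
      rw [Finset.prod_fn]
      exact Finset.measurable_prod _ (fun i _ => hmg i)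
    have key := lintegral_mul_eq_lintegral_mul_lintegral_of_indepFun (hmg a) hmp hind
    have h1 : ∫⁻ ω, ∏ i ∈ insert a s, F i (τ i ω) ∂μ
        = ∫⁻ ω, ((F a) ∘ (τ a) * ∏ j ∈ s, (F j) ∘ (τ j)) ω ∂μ := by
      apply lintegral_congr
      intro ω
      simp [Finset.prod_insert ha, Finset.prod_apply, Function.comp]
    rw [h1, key, Finset.prod_insert ha, ← ih]
    congr 1
    apply lintegral_congr
    intro ω
    simp [Finset.prod_apply, Function.comp]

private lemma aux_map {X : Ω → ℝ} (hX : Measurable X) (hd : μ.map X = expMeasure 1)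
    {F : ℝ → ℝ≥0∞} (hF : Measurable F) :
    ∫⁻ ω, F (X ω) ∂μ = ∫⁻ x, F x * exponentialPDF 1 x := by
  rw [← lintegral_map hF hX, hd, expMeasure, gammaMeasure,
    lintegral_withDensity_eq_lintegral_mul _
      (show Measurable (gammaPDF 1 1) from (measurable_gammaPDFReal 1 1).ennreal_ofReal) hF]
  apply lintegral_congr
  intro x
  rw [Pi.mul_apply, mul_comm]
  rfl

private lemma aux_pdf (x : ℝ) :
    exponentialPDF 1 x = ENNReal.ofReal (if 0 ≤ x then Real.exp (-x) else 0) := by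
  rw [exponentialPDF_eq]; simp

private lemma aux_value {X : Ω → ℝ} (hX : Measurable X) (hd : μ.map X = expMeasure 1)
    {F : ℝ → ℝ≥0∞} (hF : Measurable F) {g : ℝ → ℝ} (hg : Integrable g)
    (hgnn : ∀ x, 0 ≤ g x) (hFg : ∀ x, F x * exponentialPDF 1 x = ENNReal.ofReal (g x)) :
    ∫⁻ ω, F (X ω) ∂μ = ENNReal.ofReal (∫ x, g x) := by
  rw [aux_map hX hd hF, lintegral_congr hFg,
    ← ofReal_integral_eq_lintegral_ofReal hg (Filter.Eventually.of_forall hgnn)]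

private lemma aux_val_q {X : Ω → ℝ} (hX : Measurable X) (hd : μ.map X = expMeasure 1)
    {S : ℝ} (hS : 0 < S) :
    ∫⁻ ω, (if X ω < S then (1:ℝ≥0∞) else 0) ∂μ = ENNReal.ofReal (1 - Real.exp (-S)) := by
  have hgind : (fun x : ℝ => if 0 ≤ x ∧ x < S then Real.exp (-x) else 0)
      = (Set.Ico (0:ℝ) S).indicator fun x => Real.exp (-x) := by
    funext x; simp [Set.indicator_apply, Set.mem_Ico]
  have hg : Integrable (fun x : ℝ => if 0 ≤ x ∧ x < S then Real.exp (-x) else 0) := by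
    rw [hgind, integrable_indicator_iff measurableSet_Ico]
    exact ((Real.continuous_exp.comp continuous_neg).integrableOn_Icc).mono_set
      Set.Ico_subset_Icc_self
  rw [aux_value hX hd (Measurable.ite measurableSet_Iio measurable_const measurable_const) hg
    (fun x => by split <;> positivity)
    (fun x => by rw [aux_pdf]; by_cases h1 : x < S <;> by_cases h2 : 0 ≤ x <;>
      simp [h1, h2])]
  congr 1
  rw [hgind, integral_indicator measurableSet_Ico, integral_Ico_eq_integral_Ioo,
    ← integral_Ioc_eq_integral_Ioo]
  have := aux_exp_Ioc (c := -1) (by norm_num) hS.le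
  simp only [neg_one_mul] at this
  rw [this]; norm_num

private lemma aux_val_m {X : Ω → ℝ} (hX : Measurable X) (hd : μ.map X = expMeasure 1) :
    ∫⁻ ω, ENNReal.ofReal (X ω) ∂μ = 1 := by
  have hgind : (fun x : ℝ => if 0 ≤ x then x * Real.exp (-x) else 0)
      = (Set.Ici (0:ℝ)).indicator fun x => x * Real.exp (-x) := by
    funext x; simp [Set.indicator_apply]
  have hg : Integrable (fun x : ℝ => if 0 ≤ x then x * Real.exp (-x) else 0) := by
    rw [hgind, integrable_indicator_iff measurableSet_Ici,
      integrableOn_Ici_iff_integrableOn_Ioi]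
    exact aux_xexp_int
  rw [aux_value hX hd ENNReal.measurable_ofReal hg
    (fun x => by split <;> positivity)
    (fun x => by
      rw [aux_pdf]
      by_cases h2 : 0 ≤ x
      · simp only [h2, if_true, ← ENNReal.ofReal_mul h2]
      · simp [h2, ENNReal.ofReal_of_nonpos (le_of_not_ge h2)])]
  rw [hgind, integral_indicator measurableSet_Ici, integral_Ici_eq_integral_Ioi, aux_xexp]
  simp

private lemma aux_val_a {X : Ω → ℝ} (hX : Measurable X) (hd : μ.map X = expMeasure 1)
    {t S : ℝ} (ht : t < 1) (hS : 0 < S) :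
    ∫⁻ ω, (if X ω < S then ENNReal.ofReal (Real.exp (t * X ω)) else 0) ∂μ
      = ENNReal.ofReal ((1 - Real.exp ((t - 1) * S)) / (1 - t)) := by
  have hc : t - 1 < 0 := by linarith
  have hgind : (fun x : ℝ => if 0 ≤ x ∧ x < S then Real.exp ((t - 1) * x) else 0)
      = (Set.Ico (0:ℝ) S).indicator fun x => Real.exp ((t - 1) * x) := by
    funext x; simp [Set.indicator_apply, Set.mem_Ico]
  have hg : Integrable (fun x : ℝ => if 0 ≤ x ∧ x < S then Real.exp ((t - 1) * x) else 0) := by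
    rw [hgind, integrable_indicator_iff measurableSet_Ico]
    exact ((Real.continuous_exp.comp (continuous_const.mul continuous_id)).integrableOn_Icc
      ).mono_set Set.Ico_subset_Icc_self
  rw [aux_value hX hd (F := fun x => if x < S then ENNReal.ofReal (Real.exp (t * x)) else 0)
    (Measurable.ite measurableSet_Iio
      ((Real.measurable_exp.comp (measurable_id.const_mul t)).ennreal_ofReal)
      measurable_const)
    hg (fun x => by split <;> positivity)
    (fun x => by
      rw [aux_pdf]
      by_cases h1 : x < S <;> by_cases h2 : 0 ≤ x <;>
        simp [h1, h2, ← ENNReal.ofReal_mul (Real.exp_nonneg (t * x)), ← Real.exp_add] <;>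
        ring_nf)]
  congr 1
  rw [hgind, integral_indicator measurableSet_Ico, integral_Ico_eq_integral_Ioo,
    ← integral_Ioc_eq_integral_Ioo, aux_exp_Ioc hc hS.le]
  rw [neg_sub]

private lemma aux_val_b {X : Ω → ℝ} (hX : Measurable X) (hd : μ.map X = expMeasure 1)
    {t S : ℝ} (ht : t < 1) (hS : 0 < S) :
    ∫⁻ ω, (if S ≤ X ω then ENNReal.ofReal (Real.exp (t * X ω)) else 0) ∂μ
      = ENNReal.ofReal (Real.exp ((t - 1) * S) / (1 - t)) := by
  have hc : t - 1 < 0 := by linarith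
  have hgind : (fun x : ℝ => if S ≤ x then Real.exp ((t - 1) * x) else 0)
      = (Set.Ici S).indicator fun x => Real.exp ((t - 1) * x) := by
    funext x; simp [Set.indicator_apply]
  have hg : Integrable (fun x : ℝ => if S ≤ x then Real.exp ((t - 1) * x) else 0) := by
    rw [hgind, integrable_indicator_iff measurableSet_Ici,
      integrableOn_Ici_iff_integrableOn_Ioi]
    exact aux_exp_Ioi_int hc S
  rw [aux_value hX hd (F := fun x => if S ≤ x then ENNReal.ofReal (Real.exp (t * x)) else 0)
    (Measurable.ite measurableSet_Ici
      ((Real.measurable_exp.comp (measurable_id.const_mul t)).ennreal_ofReal)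
      measurable_const)
    hg (fun x => by split <;> positivity)
    (fun x => by
      rw [aux_pdf]
      by_cases h1 : S ≤ x
      · have h2 : 0 ≤ x := le_trans hS.le h1
        simp [h1, h2, ← ENNReal.ofReal_mul (Real.exp_nonneg (t * x)), ← Real.exp_add]
        ring_nf
      · simp [h1])]
  congr 1
  rw [hgind, integral_indicator measurableSet_Ici, integral_Ici_eq_integral_Ioi,
    aux_exp_Ioi hc S, neg_sub]

end AuxRenewal

open scoped ENNReal in
/-- Let `S > 0` and `(τ_i)_{i≥1}` be i.i.d. exponential(1) random variables.
Let `N = min{i ≥ 1 : τ_i ≥ S}` and `ν = τ_1 + ⋯ + τ_N`. Then `E[ν] = e^S`, and for every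
real `t` with `t < 1` and `t e^{S(1−t)} < 1`, `E[e^{tν}] = 1/(1 − t e^{S(1−t)})`. -/
theorem renewal_block_mean_and_mgf
    {Ω : Type*} [MeasurableSpace Ω] (μ : Measure Ω) [IsProbabilityMeasure μ]
    (S : ℝ) (hS : 0 < S)
    (τ : ℕ → Ω → ℝ) (hmeas : ∀ i, Measurable (τ i))
    (hindep : iIndepFun τ μ)
    (hdist : ∀ i, μ.map (τ i) = expMeasure 1)
    (N : Ω → ℕ) (hN : ∀ ω, N ω = sInf {i : ℕ | 1 ≤ i ∧ S ≤ τ i ω})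
    (ν : Ω → ℝ) (hν : ∀ ω, ν ω = ∑ i ∈ Finset.Icc 1 (N ω), τ i ω) :
    (∫ ω, ν ω ∂μ = Real.exp S)
    ∧ ∀ t : ℝ, t < 1 → t * Real.exp (S * (1 - t)) < 1 →
        ∫ ω, Real.exp (t * ν ω) ∂μ = 1 / (1 - t * Real.exp (S * (1 - t))) := by
  classical
  -- a.e. nonnegativity of the τ i
  have hτ0 : ∀ᵐ ω ∂μ, ∀ i, 0 ≤ τ i ω := by
    rw [ae_all_iff]
    intro i
    have h0 : μ (τ i ⁻¹' Set.Iio 0) = 0 := by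
      rw [← Measure.map_apply (hmeas i) measurableSet_Iio, hdist i, expMeasure, gammaMeasure,
        withDensity_apply _ measurableSet_Iio]
      exact lintegral_gammaPDF_of_nonpos le_rfl
    rw [ae_iff]
    have he : {ω | ¬ 0 ≤ τ i ω} = τ i ⁻¹' Set.Iio 0 := by
      ext ω; simp [not_le]
    rw [he]; exact h0
  -- characterization of N
  have hNchar : ∀ ω n, N ω = n + 1 ↔
      (∀ i, 1 ≤ i → i ≤ n → τ i ω < S) ∧ S ≤ τ (n + 1) ω := by
    intro ω n
    rw [hN ω]
    constructor
    · intro h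
      have hne : {i : ℕ | 1 ≤ i ∧ S ≤ τ i ω}.Nonempty := by
        by_contra hcne
        rw [Set.not_nonempty_iff_eq_empty] at hcne
        rw [hcne, Nat.sInf_empty] at h
        omega
      have hmem := Nat.sInf_mem hne
      rw [h] at hmem
      refine ⟨fun i h1 h2 => ?_, hmem.2⟩
      by_contra hcon
      push_neg at hcon
      have hle : sInf {i : ℕ | 1 ≤ i ∧ S ≤ τ i ω} ≤ i := Nat.sInf_le ⟨h1, hcon⟩
      rw [h] at hle
      omega
    · rintro ⟨h1, h2⟩
      have hmem : n + 1 ∈ {i : ℕ | 1 ≤ i ∧ S ≤ τ i ω} := ⟨by omega, h2⟩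
      have hle : sInf {i : ℕ | 1 ≤ i ∧ S ≤ τ i ω} ≤ n + 1 := Nat.sInf_le hmem
      have hmem2 := Nat.sInf_mem (⟨n + 1, hmem⟩ :
        {i : ℕ | 1 ≤ i ∧ S ≤ τ i ω}.Nonempty)
      by_contra hcon
      have hm : sInf {i : ℕ | 1 ≤ i ∧ S ≤ τ i ω} ≤ n := by
        rcases hmem2 with ⟨hm1, _⟩
        omega
      exact absurd hmem2.2 (not_le.2 (h1 _ hmem2.1 hm))
  have hN0iff : ∀ ω, N ω = 0 ↔ ∀ i, 1 ≤ i → τ i ω < S := by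
    intro ω
    rw [hN ω]
    constructor
    · intro h i hi
      by_contra hcon
      push_neg at hcon
      have := (Nat.sInf_mem (⟨i, hi, hcon⟩ :
        {i : ℕ | 1 ≤ i ∧ S ≤ τ i ω}.Nonempty)).1
      rw [h] at this
      omega
    · intro h
      rw [Nat.sInf_eq_zero]
      right
      rw [Set.eq_empty_iff_forall_notMem]
      rintro i ⟨hi1, hi2⟩
      exact absurd hi2 (not_le.2 (h i hi1))
  -- measurability of N and ν
  have hC_meas : MeasurableSet {ω | ∀ i, 1 ≤ i → τ i ω < S} := by
    have he : {ω | ∀ i, 1 ≤ i → τ i ω < S}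
        = ⋂ i, ⋂ (_ : 1 ≤ i), {ω | τ i ω < S} := by
      ext ω; simp
    rw [he]
    exact MeasurableSet.iInter fun i => MeasurableSet.iInter fun _ =>
      measurableSet_lt (hmeas i) measurable_const
  have hNmeas : Measurable N := by
    apply measurable_to_countable'
    intro n
    match n with
    | 0 =>
      have he : N ⁻¹' {0} = {ω | ∀ i, 1 ≤ i → τ i ω < S} := by
        ext ω; simp [hN0iff ω]
      rw [he]; exact hC_meas
    | n + 1 =>
      have he : N ⁻¹' {n + 1}
          = (⋂ i, ⋂ (_ : 1 ≤ i), ⋂ (_ : i ≤ n), {ω | τ i ω < S}) ∩ {ω | S ≤ τ (n + 1) ω} := by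
        ext ω; simp [hNchar ω n]
      rw [he]
      exact ((MeasurableSet.iInter fun i => MeasurableSet.iInter fun _ =>
        MeasurableSet.iInter fun _ => measurableSet_lt (hmeas i) measurable_const)).inter
        (measurableSet_le measurable_const (hmeas (n + 1)))
  have hνmeas : Measurable ν := by
    have h1 : Measurable fun p : Ω × ℕ => ∑ i ∈ Finset.Icc 1 p.2, τ i p.1 :=
      measurable_from_prod_countable_left fun n => by
        exact Finset.measurable_sum (Finset.Icc 1 n) fun i _ => hmeas i
    have h2 : Measurable fun ω => ∑ i ∈ Finset.Icc 1 (N ω), τ i ω :=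
      h1.comp (measurable_id.prodMk hNmeas)
    have he : ν = fun ω => ∑ i ∈ Finset.Icc 1 (N ω), τ i ω := funext hν
    rw [he]; exact h2
  -- N ≥ 1 a.e.
  have hC0 : μ {ω | ∀ i, 1 ≤ i → τ i ω < S} = 0 := by
    have hq1 : ENNReal.ofReal (1 - Real.exp (-S)) < 1 := by
      rw [ENNReal.ofReal_lt_one]
      nlinarith [Real.exp_pos (-S)]
    have hCle : ∀ n : ℕ, μ {ω | ∀ i, 1 ≤ i → τ i ω < S}
        ≤ ENNReal.ofReal (1 - Real.exp (-S)) ^ n := by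
      intro n
      have hFmeas : ∀ i : ℕ, Measurable fun x : ℝ => if x < S then (1:ℝ≥0∞) else 0 :=
        fun i => Measurable.ite measurableSet_Iio measurable_const measurable_const
      have hle : μ {ω | ∀ i, 1 ≤ i → τ i ω < S}
          ≤ ∫⁻ ω, ∏ i ∈ Finset.Icc 1 n, (if τ i ω < S then (1:ℝ≥0∞) else 0) ∂μ := by
        rw [← lintegral_indicator_one hC_meas]
        apply lintegral_mono
        intro ω
        by_cases hω : ω ∈ {ω | ∀ i, 1 ≤ i → τ i ω < S}
        · have hone : ∀ i ∈ Finset.Icc 1 n, (if τ i ω < S then (1:ℝ≥0∞) else 0) = 1 :=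
            fun i hi => if_pos (hω i (Finset.mem_Icc.1 hi).1)
          rw [Set.indicator_of_mem hω]
          show (1:ℝ≥0∞) ≤ ∏ i ∈ Finset.Icc 1 n, (if τ i ω < S then (1:ℝ≥0∞) else 0)
          rw [Finset.prod_congr rfl hone, Finset.prod_const_one]
        · simp [Set.indicator_of_notMem hω]
      calc μ {ω | ∀ i, 1 ≤ i → τ i ω < S} ≤ _ := hle
        _ = ∏ i ∈ Finset.Icc 1 n, ∫⁻ ω, (if τ i ω < S then (1:ℝ≥0∞) else 0) ∂μ :=
          aux_lintegral_prod hmeas hindep _ hFmeas _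
        _ = ∏ _i ∈ Finset.Icc 1 n, ENNReal.ofReal (1 - Real.exp (-S)) :=
          Finset.prod_congr rfl fun i _ => aux_val_q (hmeas i) (hdist i) hS
        _ = ENNReal.ofReal (1 - Real.exp (-S)) ^ n := by
          rw [Finset.prod_const, Nat.card_Icc]
          simp
    exact le_antisymm
      (ge_of_tendsto' (ENNReal.tendsto_pow_atTop_nhds_zero_of_lt_one hq1) hCle)
      (zero_le)
  have hNae : ∀ᵐ ω ∂μ, 1 ≤ N ω := by
    rw [ae_iff]
    refine measure_mono_null ?_ hC0
    intro ω hω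
    simp only [Set.mem_setOf_eq, not_le, Nat.lt_one_iff] at hω
    exact (hN0iff ω).1 hω
  constructor
  · -- the mean
    have heq : ∀ᵐ ω ∂μ, ENNReal.ofReal (ν ω)
        = ∑' j : ℕ, ∏ i ∈ Finset.Icc 1 (j + 1),
            (if i = j + 1 then ENNReal.ofReal (τ i ω)
             else if τ i ω < S then 1 else 0) := by
      filter_upwards [hτ0, hNae] with ω hpos hs1
      obtain ⟨m, hm⟩ : ∃ m, N ω = m + 1 := ⟨N ω - 1, by omega⟩
      have hch := (hNchar ω m).1 hm
      have hzero : ∀ j ∉ Finset.range (m + 1), (∏ i ∈ Finset.Icc 1 (j + 1),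
          (if i = j + 1 then ENNReal.ofReal (τ i ω)
           else if τ i ω < S then 1 else 0)) = 0 := by
        intro j hj
        rw [Finset.mem_range, not_lt] at hj
        apply Finset.prod_eq_zero (Finset.mem_Icc.2 ⟨by omega, by omega⟩ :
          (m + 1) ∈ Finset.Icc 1 (j + 1))
        rw [if_neg (by omega : m + 1 ≠ j + 1)]
        exact if_neg (not_lt.2 hch.2)
      rw [tsum_eq_sum hzero]
      have hterm : ∀ j ∈ Finset.range (m + 1), (∏ i ∈ Finset.Icc 1 (j + 1),
          (if i = j + 1 then ENNReal.ofReal (τ i ω)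
           else if τ i ω < S then 1 else 0)) = ENNReal.ofReal (τ (j + 1) ω) := by
        intro j hj
        rw [Finset.mem_range] at hj
        rw [Finset.prod_Icc_succ_top (by omega : 1 ≤ j + 1)]
        have h1 : ∀ i ∈ Finset.Icc 1 j,
            (if i = j + 1 then ENNReal.ofReal (τ i ω)
             else if τ i ω < S then 1 else 0) = 1 := by
          intro i hi
          obtain ⟨hi1, hi2⟩ := Finset.mem_Icc.1 hi
          rw [if_neg (by omega : i ≠ j + 1)]
          exact if_pos (hch.1 i hi1 (by omega))
        rw [Finset.prod_congr rfl h1, Finset.prod_const_one, one_mul, if_pos rfl]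
      rw [Finset.sum_congr rfl hterm,
        ← ENNReal.ofReal_sum_of_nonneg (fun i _ => hpos _)]
      congr 1
      rw [hν ω, hm,
        show Finset.Icc 1 (m + 1) = Finset.Ico 1 (m + 2) by rw [← Finset.Ico_add_one_right_eq_Icc]; rfl,
        Finset.sum_Ico_eq_sum_range]
      apply Finset.sum_congr (by norm_num)
      intro i _
      rw [Nat.add_comm]
    have hstep : ∫⁻ ω, ENNReal.ofReal (ν ω) ∂μ = ENNReal.ofReal (Real.exp S) := by
      have hHmeas : ∀ j i : ℕ, Measurable fun x : ℝ =>
          (if i = j + 1 then ENNReal.ofReal x else if x < S then 1 else 0) := by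
        intro j i
        split
        · exact ENNReal.measurable_ofReal
        · exact Measurable.ite measurableSet_Iio measurable_const measurable_const
      rw [lintegral_congr_ae heq,
        lintegral_tsum (f := fun (j : ℕ) (ω : Ω) => ∏ i ∈ Finset.Icc 1 (j + 1),
            (if i = j + 1 then ENNReal.ofReal (τ i ω)
             else if τ i ω < S then 1 else 0))
          (fun j => by
            exact (Finset.measurable_prod (Finset.Icc 1 (j + 1))
              (fun i _ => (hHmeas j i).comp (hmeas i))).aemeasurable)]
      have hval : ∀ j : ℕ, ∫⁻ ω, ∏ i ∈ Finset.Icc 1 (j + 1),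
          (if i = j + 1 then ENNReal.ofReal (τ i ω)
           else if τ i ω < S then 1 else 0) ∂μ
          = ENNReal.ofReal (1 - Real.exp (-S)) ^ j := by
        intro j
        rw [aux_lintegral_prod hmeas hindep _ (hHmeas j) (Finset.Icc 1 (j + 1)),
          Finset.prod_Icc_succ_top (by omega : 1 ≤ j + 1)]
        have h1 : ∀ i ∈ Finset.Icc 1 j, ∫⁻ ω,
            (if i = j + 1 then ENNReal.ofReal (τ i ω)
             else if τ i ω < S then 1 else 0) ∂μ
            = ENNReal.ofReal (1 - Real.exp (-S)) := by
          intro i hi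
          have hij : i ≠ j + 1 := by
            have := (Finset.mem_Icc.1 hi).2; omega
          simp only [if_neg hij]
          exact aux_val_q (hmeas i) (hdist i) hS
        rw [Finset.prod_congr rfl h1, Finset.prod_const, Nat.card_Icc]
        simp only [eq_self_iff_true, if_true]
        rw [aux_val_m (hmeas (j + 1)) (hdist (j + 1))]
        simp
      rw [tsum_congr hval, ENNReal.tsum_geometric]
      have hle1 : Real.exp (-S) < 1 := by
        simpa using Real.exp_lt_exp.2 (show -S < (0:ℝ) by linarith)
      have h2 : (1:ℝ≥0∞) - ENNReal.ofReal (1 - Real.exp (-S))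
          = ENNReal.ofReal (Real.exp (-S)) := by
        rw [← ENNReal.ofReal_one, ← ENNReal.ofReal_sub _ (by linarith)]
        norm_num
      rw [h2, ← ENNReal.ofReal_inv_of_pos (Real.exp_pos _), Real.exp_neg, inv_inv]
    have hnn : 0 ≤ᵐ[μ] ν := by
      filter_upwards [hτ0] with ω h
      rw [hν]
      exact Finset.sum_nonneg fun i _ => h i
    rw [integral_eq_lintegral_of_nonneg_ae hnn hνmeas.aestronglyMeasurable, hstep,
      ENNReal.toReal_ofReal (Real.exp_pos S).le]
  · -- the mgf
    intro t ht1 ht2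
    have hc : t - 1 < 0 := by linarith
    have h1t : (0:ℝ) < 1 - t := by linarith
    have hEpos := Real.exp_pos ((t - 1) * S)
    have hE : Real.exp (S * (1 - t)) = (Real.exp ((t - 1) * S))⁻¹ := by
      rw [← Real.exp_neg]; congr 1; ring
    have ht2' : t * (Real.exp ((t - 1) * S))⁻¹ < 1 := by rw [← hE]; exact ht2
    have htE : t < Real.exp ((t - 1) * S) := by
      have h3 : t * (Real.exp ((t - 1) * S))⁻¹ * Real.exp ((t - 1) * S)
          < 1 * Real.exp ((t - 1) * S) := mul_lt_mul_of_pos_right ht2' hEpos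
      rw [one_mul, mul_assoc, inv_mul_cancel₀ hEpos.ne', mul_one] at h3
      exact h3
    set E := Real.exp ((t - 1) * S) with hEdef
    set ar : ℝ := (1 - E) / (1 - t) with har
    set br : ℝ := E / (1 - t) with hbr
    have hES : E < 1 := by
      rw [hEdef]
      simpa using Real.exp_lt_exp.2 (show (t - 1) * S < 0 by nlinarith)
    have har0 : 0 ≤ ar := div_nonneg (by linarith) h1t.le
    have har1 : ar < 1 := by
      rw [har, div_lt_one h1t]; linarith
    have heq : ∀ᵐ ω ∂μ, ENNReal.ofReal (Real.exp (t * ν ω))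
        = ∑' n : ℕ, ∏ i ∈ Finset.Icc 1 (n + 1),
            (if i = n + 1 then (if S ≤ τ i ω then ENNReal.ofReal (Real.exp (t * τ i ω)) else 0)
             else (if τ i ω < S then ENNReal.ofReal (Real.exp (t * τ i ω)) else 0)) := by
      filter_upwards [hNae] with ω hs1
      obtain ⟨m, hm⟩ : ∃ m, N ω = m + 1 := ⟨N ω - 1, by omega⟩
      have hch := (hNchar ω m).1 hm
      have hzero : ∀ n : ℕ, n ≠ m → (∏ i ∈ Finset.Icc 1 (n + 1),
          (if i = n + 1 then (if S ≤ τ i ω then ENNReal.ofReal (Real.exp (t * τ i ω)) else 0)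
           else (if τ i ω < S then ENNReal.ofReal (Real.exp (t * τ i ω)) else 0))) = 0 := by
        intro n hn
        rcases lt_or_gt_of_ne hn with hlt | hgt
        · apply Finset.prod_eq_zero (Finset.mem_Icc.2 ⟨by omega, by omega⟩ :
            (n + 1) ∈ Finset.Icc 1 (n + 1))
          rw [if_pos rfl]
          exact if_neg (not_le.2 (hch.1 (n + 1) (by omega) (by omega)))
        · apply Finset.prod_eq_zero (Finset.mem_Icc.2 ⟨by omega, by omega⟩ :
            (m + 1) ∈ Finset.Icc 1 (n + 1))
          rw [if_neg (by omega : m + 1 ≠ n + 1)]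
          exact if_neg (not_lt.2 hch.2)
      rw [tsum_eq_single m hzero]
      have hfac : ∀ i ∈ Finset.Icc 1 (m + 1),
          (if i = m + 1 then (if S ≤ τ i ω then ENNReal.ofReal (Real.exp (t * τ i ω)) else 0)
           else (if τ i ω < S then ENNReal.ofReal (Real.exp (t * τ i ω)) else 0))
          = ENNReal.ofReal (Real.exp (t * τ i ω)) := by
        intro i hi
        obtain ⟨hi1, hi2⟩ := Finset.mem_Icc.1 hi
        by_cases hin : i = m + 1
        · rw [if_pos hin, hin, if_pos hch.2]
        · rw [if_neg hin, if_pos (hch.1 i hi1 (by omega))]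
      rw [Finset.prod_congr rfl hfac,
        ← ENNReal.ofReal_prod_of_nonneg (fun i _ => Real.exp_nonneg _), ← Real.exp_sum]
      congr 2
      rw [hν ω, hm, Finset.mul_sum]
    have hFmeas : ∀ n i : ℕ, Measurable fun x : ℝ =>
        (if i = n + 1 then (if S ≤ x then ENNReal.ofReal (Real.exp (t * x)) else 0)
         else (if x < S then ENNReal.ofReal (Real.exp (t * x)) else 0)) := by
      intro n i
      split
      · exact Measurable.ite measurableSet_Ici
          ((Real.measurable_exp.comp (measurable_id.const_mul t)).ennreal_ofReal)
          measurable_const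
      · exact Measurable.ite measurableSet_Iio
          ((Real.measurable_exp.comp (measurable_id.const_mul t)).ennreal_ofReal)
          measurable_const
    have hstep : ∫⁻ ω, ENNReal.ofReal (Real.exp (t * ν ω)) ∂μ
        = ENNReal.ofReal ((1 - ar)⁻¹ * br) := by
      rw [lintegral_congr_ae heq,
        lintegral_tsum (f := fun (n : ℕ) (ω : Ω) => ∏ i ∈ Finset.Icc 1 (n + 1),
            (if i = n + 1 then (if S ≤ τ i ω then ENNReal.ofReal (Real.exp (t * τ i ω)) else 0)
             else (if τ i ω < S then ENNReal.ofReal (Real.exp (t * τ i ω)) else 0)))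
          (fun n => by
            exact (Finset.measurable_prod (Finset.Icc 1 (n + 1))
              (fun i _ => (hFmeas n i).comp (hmeas i))).aemeasurable)]
      have hval : ∀ n : ℕ, ∫⁻ ω, ∏ i ∈ Finset.Icc 1 (n + 1),
          (if i = n + 1 then (if S ≤ τ i ω then ENNReal.ofReal (Real.exp (t * τ i ω)) else 0)
           else (if τ i ω < S then ENNReal.ofReal (Real.exp (t * τ i ω)) else 0)) ∂μ
          = ENNReal.ofReal ar ^ n * ENNReal.ofReal br := by
        intro n
        rw [aux_lintegral_prod hmeas hindep _ (hFmeas n) (Finset.Icc 1 (n + 1)),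
          Finset.prod_Icc_succ_top (by omega : 1 ≤ n + 1)]
        have h1 : ∀ i ∈ Finset.Icc 1 n, ∫⁻ ω,
            (if i = n + 1 then (if S ≤ τ i ω then ENNReal.ofReal (Real.exp (t * τ i ω)) else 0)
             else (if τ i ω < S then ENNReal.ofReal (Real.exp (t * τ i ω)) else 0)) ∂μ
            = ENNReal.ofReal ar := by
          intro i hi
          have hij : i ≠ n + 1 := by
            have := (Finset.mem_Icc.1 hi).2; omega
          simp only [if_neg hij]
          rw [aux_val_a (hmeas i) (hdist i) ht1 hS]
        rw [Finset.prod_congr rfl h1, Finset.prod_const, Nat.card_Icc]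
        simp only [eq_self_iff_true, if_true]
        rw [aux_val_b (hmeas (n + 1)) (hdist (n + 1)) ht1 hS]
        simp
        rfl
      rw [tsum_congr hval, ENNReal.tsum_mul_right, ENNReal.tsum_geometric]
      have h2 : (1:ℝ≥0∞) - ENNReal.ofReal ar = ENNReal.ofReal (1 - ar) := by
        rw [← ENNReal.ofReal_one, ← ENNReal.ofReal_sub _ har0]
      have h1ar : (0:ℝ) < 1 - ar := by linarith
      rw [h2, ← ENNReal.ofReal_inv_of_pos h1ar,
        ← ENNReal.ofReal_mul (inv_nonneg.2 h1ar.le)]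
    have hnn : 0 ≤ᵐ[μ] fun ω => Real.exp (t * ν ω) :=
      Filter.Eventually.of_forall fun ω => (Real.exp_pos _).le
    rw [integral_eq_lintegral_of_nonneg_ae hnn
      ((hνmeas.const_mul t).exp.aestronglyMeasurable), hstep,
      ENNReal.toReal_ofReal (mul_nonneg (inv_nonneg.2 (by linarith : (0:ℝ) ≤ 1 - ar))
        (div_nonneg hEpos.le h1t.le))]
    -- final algebra
    have hEt : 0 < E - t := by linarith
    have hden : 0 < 1 - t * Real.exp (S * (1 - t)) := by linarith
    rw [har, hE]
    rw [hE] at hden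
    have hne1 : (1:ℝ) - t ≠ 0 := h1t.ne'
    have hne2 : E ≠ 0 := hEpos.ne'
    have hne3 : E - t ≠ 0 := hEt.ne'
    have hne4 : 1 - t * E⁻¹ ≠ 0 := hden.ne'
    field_simp
    ring
    rw [← sub_mul, mul_inv_cancel₀ hne3]
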